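/- arXiv:1907.10583 — 3 statements merged into one kernel-verified Lean document; each statement's English description precedes it below -/
import Mathlib

section
/- Let V be a finite type, N ∈ ℕ, and Ω := {η : V → ℕ | Σ_x η_x ≤ N}. Let 𝒜 be the annihilation operator on functions Ω → ℝ, (𝒜f)(η) := Σ_{x ∈ V} η_x · f(η − δ_x). Let L be a linear operator on functions Ω → ℝ that commutes with 𝒜 and preserves each particle-number sector (for every k ≤ N, L maps functions vanishing outside Ω_k := {η : |η| = k} to functions vanishing outside Ω_k). Then for every t ∈ ℝ, every x = (x_1,…,x_n) ∈ V^n with n ≤ N, and every configuration ξ with |ξ| = m where 1 ≤ m < n: (exp(t·L)(F(ξ,·)))(φ(x)) = Σ_{S ⊆ {1,…,n}, |S| = m} (exp(t·L) h_ξ)(φ(x|_S)), where h_ξ is the indicator function of the configuration ξ (h_ξ(η) = 1 if η = ξ, else 0) and x|_S denotes the subfamily (x_i)_{i ∈ S}. -/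
/-- Configurations on `V` with at most `N` particles. -/
abbrev Conf (V : Type*) [Fintype V] (N : ℕ) := {η : V → ℕ // ∑ x, η x ≤ N}

noncomputable instance Conf.fintype (V : Type*) [Fintype V] [DecidableEq V] (N : ℕ) :
    Fintype (Conf V N) :=
  Fintype.ofInjective
    (fun η : Conf V N =>
      (fun x => ⟨η.1 x, Nat.lt_succ_of_le
        ((Finset.single_le_sum (f := η.1) (fun i _ => Nat.zero_le _)
          (Finset.mem_univ x)).trans η.2)⟩ : V → Fin (N + 1)))
    (by
      intro a b h
      apply Subtype.ext
      funext x
      exact congrArg Fin.val (congrFun h x))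

/-- `η - δ_x` : remove one particle at `x`. -/
def removeAt {V : Type*} [Fintype V] [DecidableEq V] {N : ℕ}
    (η : Conf V N) (x : V) : Conf V N :=
  ⟨fun y => η.1 y - (if y = x then 1 else 0),
    le_trans (Finset.sum_le_sum fun i _ => Nat.sub_le _ _) η.2⟩

/-- The annihilation operator `(𝒜 f)(η) = ∑_x η_x f(η - δ_x)`. -/
noncomputable def ann {V : Type*} [Fintype V] [DecidableEq V] {N : ℕ}
    (f : Conf V N → ℝ) : Conf V N → ℝ :=
  fun η => ∑ x : V, (η.1 x : ℝ) * f (removeAt η x)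

/-- `F ξ η = ∏_{x ∈ V} C(η x, ξ x)`. -/
def Ffun {V : Type*} [Fintype V] {N : ℕ} (ξ η : Conf V N) : ℕ :=
  ∏ x : V, Nat.choose (η.1 x) (ξ.1 x)

/-- The configuration `φ((xᵢ)_{i ∈ S}) = ∑_{i ∈ S} δ_{xᵢ}` of a subfamily of
labeled particle positions, as an element of `Conf V N` (for `n ≤ N`). -/
def phiS {V : Type*} [Fintype V] [DecidableEq V] {N n : ℕ} (hn : n ≤ N)
    (x : Fin n → V) (S : Finset (Fin n)) : Conf V N :=
  ⟨fun y => ∑ i ∈ S, if x i = y then 1 else 0, by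
    calc ∑ y : V, ∑ i ∈ S, (if x i = y then (1 : ℕ) else 0)
        = ∑ i ∈ S, ∑ y : V, (if x i = y then (1 : ℕ) else 0) := Finset.sum_comm
      _ = ∑ _i ∈ S, 1 := by
            refine Finset.sum_congr rfl fun i _ => ?_
            simp [Finset.sum_ite_eq]
      _ = S.card := by simp
      _ ≤ n := by simpa using Finset.card_le_univ S
      _ ≤ N := hn⟩

/-- Operator exponential `exp(t L)` on the finite-dimensional space of functions. -/
noncomputable def expOp {Ω : Type*} [Fintype Ω] (t : ℝ) (L : (Ω → ℝ) →ₗ[ℝ] (Ω → ℝ)) :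
    (Ω → ℝ) →L[ℝ] (Ω → ℝ) :=
  NormedSpace.exp (t • (LinearMap.toContinuousLinearMap L))

section Aux
variable {V : Type*} [Fintype V] [DecidableEq V] {N : ℕ}

/-- `ann` as a linear map. -/
noncomputable def annLM : (Conf V N → ℝ) →ₗ[ℝ] (Conf V N → ℝ) where
  toFun := ann
  map_add' f g := by
    funext η
    simp [ann, mul_add, Finset.sum_add_distrib]
  map_smul' c f := by
    funext η
    simp only [ann, Pi.smul_apply, smul_eq_mul, RingHom.id_apply, Finset.mul_sum]
    exact Finset.sum_congr rfl fun y _ => by ring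

lemma sum_phiS {n : ℕ} (hn : n ≤ N) (x : Fin n → V) (S : Finset (Fin n)) :
    ∑ y, (phiS hn x S).1 y = S.card := by
  calc ∑ y : V, ∑ i ∈ S, (if x i = y then (1 : ℕ) else 0)
      = ∑ i ∈ S, ∑ y : V, (if x i = y then (1 : ℕ) else 0) := Finset.sum_comm
    _ = ∑ _i ∈ S, 1 := by
          refine Finset.sum_congr rfl fun i _ => ?_
          simp [Finset.sum_ite_eq]
    _ = S.card := by simp

lemma removeAt_phiS {n : ℕ} (hn : n ≤ N) (x : Fin n → V) (S : Finset (Fin n))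
    {i : Fin n} (hi : i ∈ S) :
    removeAt (phiS hn x S) (x i) = phiS hn x (S.erase i) := by
  apply Subtype.ext
  funext y
  show (∑ j ∈ S, if x j = y then (1:ℕ) else 0) - (if y = x i then 1 else 0)
      = ∑ j ∈ S.erase i, if x j = y then 1 else 0
  rw [← Finset.add_sum_erase S _ hi]
  by_cases h : x i = y
  · simp [h]
  · simp [h, Ne.symm h]

lemma ann_phiS {n : ℕ} (hn : n ≤ N) (x : Fin n → V) (S : Finset (Fin n))
    (g : Conf V N → ℝ) :
    ann g (phiS hn x S) = ∑ i ∈ S, g (phiS hn x (S.erase i)) := by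
  unfold ann
  have : ∀ y : V, ((phiS hn x S).1 y : ℝ) * g (removeAt (phiS hn x S) y)
      = ∑ i ∈ S, if x i = y then g (removeAt (phiS hn x S) y) else 0 := by
    intro y
    show ((∑ i ∈ S, if x i = y then (1:ℕ) else 0 : ℕ) : ℝ) * _ = _
    push_cast
    rw [Finset.sum_mul]
    exact Finset.sum_congr rfl fun i _ => by by_cases h : x i = y <;> simp [h]
  rw [Finset.sum_congr rfl fun y _ => this y, Finset.sum_comm]
  refine Finset.sum_congr rfl fun i hi => ?_
  rw [Finset.sum_ite_eq (Finset.univ) (x i)]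
  simp [removeAt_phiS hn x S hi]

end Aux

section Aux2
variable {V : Type*} [Fintype V] [DecidableEq V] {N : ℕ}

lemma erase_reindex {α : Type*} [DecidableEq α] (S : Finset α) (r : ℕ)
    (f : Finset α → ℝ) :
    ∑ T ∈ S.powersetCard (r + 1), ∑ i ∈ T, f (T.erase i)
      = ∑ U ∈ S.powersetCard r, ∑ i ∈ S \ U, f U := by
  rw [Finset.sum_sigma', Finset.sum_sigma']
  refine Finset.sum_nbij' (fun p => ⟨p.1.erase p.2, p.2⟩)
    (fun p => ⟨insert p.2 p.1, p.2⟩) ?_ ?_ ?_ ?_ ?_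
  · rintro ⟨T, i⟩ hp
    simp only [Finset.mem_sigma, Finset.mem_powersetCard] at hp ⊢
    obtain ⟨⟨hTS, hTc⟩, hi⟩ := hp
    refine ⟨⟨(Finset.erase_subset _ _).trans hTS, ?_⟩, ?_⟩
    · rw [Finset.card_erase_of_mem hi, hTc]; rfl
    · exact Finset.mem_sdiff.2 ⟨hTS hi, Finset.notMem_erase _ _⟩
  · rintro ⟨U, i⟩ hp
    simp only [Finset.mem_sigma, Finset.mem_powersetCard, Finset.mem_sdiff] at hp ⊢
    obtain ⟨⟨hUS, hUc⟩, hiS, hiU⟩ := hp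
    refine ⟨⟨Finset.insert_subset hiS hUS, ?_⟩, Finset.mem_insert_self _ _⟩
    rw [Finset.card_insert_of_notMem hiU, hUc]
  · rintro ⟨T, i⟩ hp
    simp only [Finset.mem_sigma, Finset.mem_powersetCard] at hp
    simp [Finset.insert_erase hp.2]
  · rintro ⟨U, i⟩ hp
    simp only [Finset.mem_sigma, Finset.mem_powersetCard, Finset.mem_sdiff] at hp
    simp [Finset.erase_insert hp.2.2]
  · rintro ⟨T, i⟩ hp; rfl

lemma ann_iterate_phiS {n : ℕ} (hn : n ≤ N) (x : Fin n → V) :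
    ∀ (k : ℕ) (g : Conf V N → ℝ) (S : Finset (Fin n)), k ≤ S.card →
    ann^[k] g (phiS hn x S) =
      (k.factorial : ℝ) * ∑ T ∈ S.powersetCard (S.card - k), g (phiS hn x T) := by
  intro k
  induction k with
  | zero =>
    intro g S _
    simp [Finset.powersetCard_self]
  | succ k ih =>
    intro g S hk
    rw [Function.iterate_succ_apply, ih (ann g) S (le_of_lt (Nat.lt_of_succ_le hk))]
    have hr : S.card - k = (S.card - (k + 1)) + 1 := by omega
    have expand : ∀ T ∈ S.powersetCard (S.card - k),
        ann g (phiS hn x T) = ∑ i ∈ T, g (phiS hn x (T.erase i)) := by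
      intro T _
      exact ann_phiS hn x T g
    rw [Finset.sum_congr rfl expand, hr,
      erase_reindex S (S.card - (k + 1)) (fun U => g (phiS hn x U))]
    have hcount : ∀ U ∈ S.powersetCard (S.card - (k + 1)),
        ∑ _i ∈ S \ U, g (phiS hn x U) = ((k : ℝ) + 1) * g (phiS hn x U) := by
      intro U hU
      rw [Finset.sum_const]
      rw [Finset.mem_powersetCard] at hU
      rw [Finset.card_sdiff_of_subset hU.1, hU.2]
      have : S.card - (S.card - (k + 1)) = k + 1 := by omega
      rw [this, nsmul_eq_mul]
      push_cast
      ring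
    rw [Finset.sum_congr rfl hcount, ← Finset.mul_sum, Nat.factorial_succ]
    push_cast
    ring

end Aux2

section Aux3
variable {V : Type*} [Fintype V] [DecidableEq V] {N : ℕ}

lemma site_identity (a b : ℕ) : a * Nat.choose (a - 1) b = (a - b) * Nat.choose a b := by
  cases a with
  | zero => simp
  | succ c =>
    have h := Nat.choose_mul_succ_eq c b
    calc (c + 1) * Nat.choose (c + 1 - 1) b = Nat.choose c b * (c + 1) := by
          rw [Nat.add_sub_cancel]; ring
      _ = Nat.choose (c + 1) b * (c + 1 - b) := h
      _ = (c + 1 - b) * Nat.choose (c + 1) b := by ring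

lemma Ffun_removeAt (ξ η : Conf V N) (x : V) :
    Ffun ξ (removeAt η x) = Nat.choose (η.1 x - 1) (ξ.1 x) *
      ∏ y ∈ Finset.univ.erase x, Nat.choose (η.1 y) (ξ.1 y) := by
  have hv : ∀ y : V, (removeAt η x).1 y = if y = x then η.1 x - 1 else η.1 y := by
    intro y; by_cases h : y = x <;> simp [removeAt, h]
  unfold Ffun
  rw [← Finset.mul_prod_erase Finset.univ _ (Finset.mem_univ x)]
  congr 1
  · rw [hv x, if_pos rfl]
  · exact Finset.prod_congr rfl fun y hy => by
      rw [hv y, if_neg (Finset.ne_of_mem_erase hy)]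

lemma key_sum (ξ η : Conf V N) :
    ∑ x : V, η.1 x * Ffun ξ (removeAt η x)
      = ((∑ y, η.1 y) - (∑ y, ξ.1 y)) * Ffun ξ η := by
  have hterm : ∀ x : V, η.1 x * Ffun ξ (removeAt η x) = (η.1 x - ξ.1 x) * Ffun ξ η := by
    intro x
    rw [Ffun_removeAt]
    have hF : Ffun ξ η = Nat.choose (η.1 x) (ξ.1 x) *
        ∏ y ∈ Finset.univ.erase x, Nat.choose (η.1 y) (ξ.1 y) :=
      (Finset.mul_prod_erase Finset.univ _ (Finset.mem_univ x)).symm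
    rw [hF, ← mul_assoc, ← mul_assoc, site_identity]
  rw [Finset.sum_congr rfl fun x _ => hterm x, ← Finset.sum_mul]
  by_cases hle : ∀ y, ξ.1 y ≤ η.1 y
  · congr 1
    rw [Finset.sum_tsub_distrib _ (fun y _ => hle y)]
  · push_neg at hle
    obtain ⟨y, hy⟩ := hle
    have : Ffun ξ η = 0 :=
      Finset.prod_eq_zero (Finset.mem_univ y) (Nat.choose_eq_zero_of_lt hy)
    simp [this]

/-- base case helper: if sums are equal and `η ≠ ξ` then `Ffun ξ η = 0`. -/
lemma Ffun_eq_zero_of_ne (ξ η : Conf V N) (hsum : ∑ y, η.1 y = ∑ y, ξ.1 y)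
    (hne : η ≠ ξ) : Ffun ξ η = 0 := by
  by_cases hle : ∀ y, ξ.1 y ≤ η.1 y
  · exfalso
    apply hne
    apply Subtype.ext
    funext y
    exact ((Finset.sum_eq_sum_iff_of_le (fun i _ => hle i)).1 hsum.symm y
      (Finset.mem_univ y)).symm
  · push_neg at hle
    obtain ⟨y, hy⟩ := hle
    exact Finset.prod_eq_zero (Finset.mem_univ y) (Nat.choose_eq_zero_of_lt hy)

lemma sum_removeAt (η : Conf V N) (x : V) (hx : 1 ≤ η.1 x) :
    ∑ y, (removeAt η x).1 y = (∑ y, η.1 y) - 1 := by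
  unfold removeAt
  simp only
  rw [Finset.sum_tsub_distrib]
  · congr 1
    simp [Finset.sum_ite_eq']
  · intro y _
    by_cases h : y = x <;> simp [h, hx]

lemma ann_iter_ind (ξ : Conf V N) :
    ∀ (k : ℕ) (η : Conf V N), (∑ y, η.1 y) = (∑ y, ξ.1 y) + k →
    ann^[k] (fun ζ => if ζ = ξ then (1:ℝ) else 0) η = (k.factorial : ℝ) * (Ffun ξ η : ℝ) := by
  intro k
  induction k with
  | zero =>
    intro η hη
    simp only [Function.iterate_zero, id_eq, Nat.factorial_zero, Nat.cast_one, one_mul]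
    by_cases h : η = ξ
    · subst h
      simp [Ffun, Nat.choose_self]
    · rw [if_neg h, Ffun_eq_zero_of_ne ξ η (by omega) h]
      exact Nat.cast_zero.symm
  | succ k ih =>
    intro η hη
    rw [Function.iterate_succ_apply']
    show ∑ x : V, (η.1 x : ℝ) *
        (ann^[k] (fun ζ => if ζ = ξ then (1:ℝ) else 0)) (removeAt η x) = _
    have hterm : ∀ x : V, (η.1 x : ℝ) *
        (ann^[k] (fun ζ => if ζ = ξ then (1:ℝ) else 0)) (removeAt η x)
        = (η.1 x : ℝ) * ((k.factorial : ℝ) * (Ffun ξ (removeAt η x) : ℝ)) := by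
      intro x
      by_cases hx : 1 ≤ η.1 x
      · rw [ih (removeAt η x) (by rw [sum_removeAt η x hx]; omega)]
      · have : η.1 x = 0 := by omega
        simp [this]
    rw [Finset.sum_congr rfl fun x _ => hterm x]
    have : ∑ x : V, (η.1 x : ℝ) * ((k.factorial : ℝ) * (Ffun ξ (removeAt η x) : ℝ))
        = (k.factorial : ℝ) * ((∑ x : V, η.1 x * Ffun ξ (removeAt η x) : ℕ) : ℝ) := by
      push_cast
      rw [Finset.mul_sum]
      exact Finset.sum_congr rfl fun x _ => by ring
    rw [this, key_sum ξ η]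
    have h2 : (∑ y, η.1 y) - (∑ y, ξ.1 y) = k + 1 := by omega
    rw [h2, Nat.factorial_succ]
    push_cast
    ring

end Aux3

section Aux4
variable {V : Type*} [Fintype V] [DecidableEq V] {N : ℕ}
variable (L : (Conf V N → ℝ) →ₗ[ℝ] (Conf V N → ℝ)) (t : ℝ)

/-- evaluation functional: `B ↦ B f η`. -/
noncomputable def evalCLM (f : Conf V N → ℝ) (η : Conf V N) :
    (((Conf V N → ℝ) →L[ℝ] (Conf V N → ℝ)) →L[ℝ] ℝ) :=
  (ContinuousLinearMap.proj (R := ℝ) (φ := fun _ : Conf V N => ℝ) η).comp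
    (ContinuousLinearMap.apply ℝ (Conf V N → ℝ) f)

lemma pow_sector
    (hsector : ∀ k ≤ N, ∀ f : Conf V N → ℝ,
        (∀ η : Conf V N, (∑ x, η.1 x) ≠ k → f η = 0) →
        ∀ η : Conf V N, (∑ x, η.1 x) ≠ k → L f η = 0)
    {k : ℕ} (hk : k ≤ N) (f : Conf V N → ℝ)
    (hf : ∀ η : Conf V N, (∑ x, η.1 x) ≠ k → f η = 0) (j : ℕ) :
    ∀ η : Conf V N, (∑ x, η.1 x) ≠ k →
      ((t • LinearMap.toContinuousLinearMap L) ^ j) f η = 0 := by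
  induction j with
  | zero => simpa using hf
  | succ j ih =>
    intro η hη
    rw [pow_succ']
    have : ((t • LinearMap.toContinuousLinearMap L) *
        (t • LinearMap.toContinuousLinearMap L) ^ j) f
        = t • (L (((t • LinearMap.toContinuousLinearMap L) ^ j) f)) := by
      rw [ContinuousLinearMap.mul_apply]
      simp
    rw [this]
    have := hsector k hk _ ih η hη
    rw [Pi.smul_apply, this, smul_zero]

lemma expOp_sector
    (hsector : ∀ k ≤ N, ∀ f : Conf V N → ℝ,
        (∀ η : Conf V N, (∑ x, η.1 x) ≠ k → f η = 0) →
        ∀ η : Conf V N, (∑ x, η.1 x) ≠ k → L f η = 0)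
    {k : ℕ} (hk : k ≤ N) (f : Conf V N → ℝ)
    (hf : ∀ η : Conf V N, (∑ x, η.1 x) ≠ k → f η = 0)
    (η : Conf V N) (hη : (∑ x, η.1 x) ≠ k) :
    expOp t L f η = 0 := by
  have hsum := NormedSpace.expSeries_summable' (𝕂 := ℝ)
    (t • LinearMap.toContinuousLinearMap L)
  have : expOp t L f η
      = ∑' j : ℕ, ((j.factorial : ℝ)⁻¹ •
          ((t • LinearMap.toContinuousLinearMap L) ^ j)) f η := by
    rw [expOp, NormedSpace.exp_eq_tsum ℝ]
    exact (evalCLM f η).map_tsum hsum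
  rw [this]
  have hz : ∀ j : ℕ, ((j.factorial : ℝ)⁻¹ •
      ((t • LinearMap.toContinuousLinearMap L) ^ j)) f η = 0 := by
    intro j
    have := pow_sector L t hsector hk f hf j η hη
    rw [ContinuousLinearMap.smul_apply, Pi.smul_apply, this, smul_zero]
  rw [tsum_congr hz, tsum_zero]

lemma expOp_localize
    (hsector : ∀ k ≤ N, ∀ f : Conf V N → ℝ,
        (∀ η : Conf V N, (∑ x, η.1 x) ≠ k → f η = 0) →
        ∀ η : Conf V N, (∑ x, η.1 x) ≠ k → L f η = 0)
    {n : ℕ} (f : Conf V N → ℝ) (η₀ : Conf V N) (hη₀ : (∑ x, η₀.1 x) = n) :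
    expOp t L f η₀
      = expOp t L (fun η => if (∑ x, η.1 x) = n then f η else 0) η₀ := by
  have hdecomp : f = ∑ k ∈ Finset.range (N + 1),
      (fun η => if (∑ x, η.1 x) = k then f η else 0) := by
    funext η
    rw [Finset.sum_apply]
    have hmem : (∑ x, η.1 x) ∈ Finset.range (N + 1) :=
      Finset.mem_range.2 (Nat.lt_succ_of_le η.2)
    rw [Finset.sum_ite_eq (Finset.range (N + 1)) (∑ x, η.1 x) (fun _ => f η),
      if_pos hmem]
  conv_lhs => rw [hdecomp]
  rw [map_sum, Finset.sum_apply]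
  have hn' : n ≤ N := hη₀ ▸ η₀.2
  rw [Finset.sum_eq_single n]
  · intro k hk hkn
    exact expOp_sector L t hsector (Nat.lt_succ_iff.1 (Finset.mem_range.1 hk)) _
      (fun η hη => if_neg hη) η₀ (by rw [hη₀]; exact Ne.symm hkn)
  · intro hnmem
    exact absurd (Finset.mem_range.2 (Nat.lt_succ_of_le hn')) hnmem

lemma expOp_ann_comm (hcomm : ∀ f, L (ann f) = ann (L f)) (g : Conf V N → ℝ) :
    expOp t L (ann g) = ann (expOp t L g) := by
  have hc0 : Commute (LinearMap.toContinuousLinearMap L)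
      (LinearMap.toContinuousLinearMap (annLM (V := V) (N := N))) := by
    apply ContinuousLinearMap.ext
    intro f
    rw [ContinuousLinearMap.mul_apply, ContinuousLinearMap.mul_apply]
    show L (ann f) = ann (L f)
    exact hcomm f
  have hc : Commute (t • LinearMap.toContinuousLinearMap L)
      (LinearMap.toContinuousLinearMap (annLM (V := V) (N := N))) :=
    hc0.smul_left t
  have hcl := hc.exp_left
  have h2 : (NormedSpace.exp (t • LinearMap.toContinuousLinearMap L))
      ((LinearMap.toContinuousLinearMap (annLM (V := V) (N := N))) g)
      = (LinearMap.toContinuousLinearMap (annLM (V := V) (N := N)))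
      ((NormedSpace.exp (t • LinearMap.toContinuousLinearMap L)) g) := by
    rw [← ContinuousLinearMap.mul_apply, hcl, ContinuousLinearMap.mul_apply]
  exact h2

lemma expOp_ann_iterate (hcomm : ∀ f, L (ann f) = ann (L f)) :
    ∀ (k : ℕ) (g : Conf V N → ℝ),
      expOp t L (ann^[k] g) = ann^[k] (expOp t L g) := by
  intro k
  induction k with
  | zero => intro g; rfl
  | succ k ih =>
    intro g
    rw [Function.iterate_succ_apply, ih (ann g), expOp_ann_comm L t hcomm g,
      ← Function.iterate_succ_apply]

end Aux4

/-- **Recursion for factorial moments** (Theorem 3.3): for a consistent,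
particle-number-conserving configuration process, the time-`t` expectation of the
factorial-moment function `F(ξ,·)` of order `m`, started from `n > m` particles at
positions `x`, equals the sum over all `m`-element subsamples of the initial particles
of the `m`-particle transition probabilities into `ξ`. -/
theorem stmt4 {V : Type*} [Fintype V] [DecidableEq V] (N : ℕ)
    (L : (Conf V N → ℝ) →ₗ[ℝ] (Conf V N → ℝ))
    (hcomm : ∀ f, L (ann f) = ann (L f))
    (hsector : ∀ k ≤ N, ∀ f : Conf V N → ℝ,
        (∀ η : Conf V N, (∑ x, η.1 x) ≠ k → f η = 0) →
        ∀ η : Conf V N, (∑ x, η.1 x) ≠ k → L f η = 0)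
    (t : ℝ) (n : ℕ) (hn : n ≤ N) (x : Fin n → V)
    (ξ : Conf V N) (m : ℕ) (hm1 : 1 ≤ m) (hmn : m < n) (hξ : (∑ y, ξ.1 y) = m) :
    expOp t L (fun η => (Ffun ξ η : ℝ)) (phiS hn x Finset.univ)
      = ∑ S ∈ Finset.powersetCard m (Finset.univ : Finset (Fin n)),
          expOp t L (fun η => if η = ξ then 1 else 0) (phiS hn x S) := by
  set k₀ := n - m with hk₀
  have hfac : ((k₀.factorial : ℝ)) ≠ 0 := Nat.cast_ne_zero.2 k₀.factorial_ne_zero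
  have hη₀ : (∑ y, (phiS hn x (Finset.univ : Finset (Fin n))).1 y) = n := by
    rw [sum_phiS]; simp
  set g : Conf V N → ℝ := fun η => if η = ξ then 1 else 0 with hg
  have hloc1 := expOp_localize L t hsector (fun η => (Ffun ξ η : ℝ)) _ hη₀
  have hfun : (fun η : Conf V N => if (∑ z, η.1 z) = n then ((Ffun ξ η : ℝ)) else 0)
      = (fun η : Conf V N => if (∑ z, η.1 z) = n
          then (((k₀.factorial : ℝ)⁻¹) • ann^[k₀] g) η else 0) := by
    funext η
    by_cases h : (∑ z, η.1 z) = n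
    · rw [if_pos h, if_pos h, Pi.smul_apply,
        ann_iter_ind ξ k₀ η (by rw [h, hξ]; omega), smul_eq_mul, ← mul_assoc,
        inv_mul_cancel₀ hfac, one_mul]
    · rw [if_neg h, if_neg h]
  rw [hloc1, hfun, ← expOp_localize L t hsector _ _ hη₀, map_smul, Pi.smul_apply,
    expOp_ann_iterate L t hcomm k₀ g, smul_eq_mul,
    ann_iterate_phiS hn x k₀ (expOp t L g) Finset.univ (by simp; omega)]
  have hcard : (Finset.univ : Finset (Fin n)).card - k₀ = m := by simp; omega
  rw [hcard, ← mul_assoc, inv_mul_cancel₀ hfac, one_mul]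
end

section
/- Let V be a finite type, N ∈ ℕ, Ω := {η : V → ℕ | Σ_x η_x ≤ N}, and 𝒜 the annihilation operator on functions Ω → ℝ, (𝒜f)(η) := Σ_{x ∈ V} η_x · f(η − δ_x). Let L be a linear operator on functions Ω → ℝ commuting with 𝒜 and preserving each particle-number sector (for every k ≤ N, L maps functions vanishing outside Ω_k := {η : |η| = k} to functions vanishing outside Ω_k). Then for every t ∈ ℝ and all ξ, η ∈ Ω with 1 ≤ |ξ| < |η|: (exp(t·L)(F(ξ,·)))(η) = (|η| − |ξ|)^{-1} · Σ_{i ∈ V} η_i · (exp(t·L)(F(ξ,·)))(η − δ_i). -/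
/-! ### Auxiliary lemmas -/

lemma nat_choose_pred (n k : ℕ) :
    n * Nat.choose (n - 1) k = Nat.choose n k * (n - k) := by
  cases n with
  | zero =>
      cases k <;> simp
  | succ m =>
      have h1 := Nat.add_one_mul_choose_eq m k
      have h2 := Nat.choose_succ_right_eq (m + 1) k
      simpa [Nat.add_sub_cancel] using h1.trans h2

lemma real_choose_pred (n k : ℕ) :
    (n : ℝ) * (Nat.choose (n - 1) k : ℝ) = ((n : ℝ) - (k : ℝ)) * (Nat.choose n k : ℝ) := by
  rcases le_or_gt k n with h | h
  · have hid := nat_choose_pred n k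
    have hcast : ((n * Nat.choose (n - 1) k : ℕ) : ℝ)
        = ((Nat.choose n k * (n - k) : ℕ) : ℝ) := by rw [hid]
    push_cast [Nat.cast_sub h] at hcast
    linarith [hcast]
  · have h1 : Nat.choose n k = 0 := Nat.choose_eq_zero_of_lt h
    have h2 : Nat.choose (n - 1) k = 0 :=
      Nat.choose_eq_zero_of_lt (lt_of_le_of_lt (Nat.sub_le n 1) h)
    simp [h1, h2]

/-- The annihilation operator as a linear map. -/
noncomputable def annL (V : Type*) [Fintype V] [DecidableEq V] (N : ℕ) :
    ((Conf V N → ℝ) →ₗ[ℝ] (Conf V N → ℝ)) where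
  toFun := ann
  map_add' f g := by
    funext η
    simp [ann, mul_add, Finset.sum_add_distrib]
  map_smul' c f := by
    funext η
    simp [ann, Finset.mul_sum, mul_left_comm]

/-- Multiplication by the particle number, as a linear map. -/
noncomputable def numL (V : Type*) [Fintype V] [DecidableEq V] (N : ℕ) :
    ((Conf V N → ℝ) →ₗ[ℝ] (Conf V N → ℝ)) where
  toFun f := fun η => ((∑ x, η.1 x : ℕ) : ℝ) * f η
  map_add' f g := by funext η; simp [mul_add]
  map_smul' c f := by funext η; simp; ring

/-- `exp (t L)` commutes with any linear map commuting with `L`. -/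
lemma expOp_comm {Ω : Type*} [Fintype Ω] [DecidableEq Ω] (t : ℝ)
    (L B : (Ω → ℝ) →ₗ[ℝ] (Ω → ℝ)) (h : ∀ f, L (B f) = B (L f)) (f : Ω → ℝ) :
    expOp t L (B f) = B (expOp t L f) := by
  set L' := LinearMap.toContinuousLinearMap L with hL'
  set B' := LinearMap.toContinuousLinearMap B with hB'
  have hc : Commute L' B' := by
    apply ContinuousLinearMap.ext
    intro g
    simp only [ContinuousLinearMap.mul_apply, hL', hB',
      LinearMap.coe_toContinuousLinearMap']
    exact h g
  have hc2 : Commute (t • L') B' := hc.smul_left t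
  have hce : Commute (NormedSpace.exp (t • L')) B' := hc2.exp_left
  have := congrFun (congrArg (fun (T : (Ω → ℝ) →L[ℝ] (Ω → ℝ)) => (T : (Ω → ℝ) → (Ω → ℝ)))
    hce.eq) f
  simpa [expOp, ContinuousLinearMap.mul_apply, hL', hB',
    LinearMap.coe_toContinuousLinearMap'] using this

section Main

variable {V : Type*} [Fintype V] [DecidableEq V] {N : ℕ}

/-- The key combinatorial identity: `𝒜 F(ξ,·) = (|·| - |ξ|) F(ξ,·)`. -/
lemma ann_Ffun (ξ : Conf V N) (η : Conf V N) :
    ann (fun ζ => (Ffun ξ ζ : ℝ)) η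
      = (((∑ x, η.1 x : ℕ) : ℝ) - ((∑ x, ξ.1 x : ℕ) : ℝ)) * (Ffun ξ η : ℝ) := by
  have hterm : ∀ x : V,
      (η.1 x : ℝ) * (Ffun ξ (removeAt η x) : ℝ)
        = ((η.1 x : ℝ) - (ξ.1 x : ℝ)) * (Ffun ξ η : ℝ) := by
    intro x
    have hprod : (Ffun ξ (removeAt η x) : ℝ)
        = (Nat.choose (η.1 x - 1) (ξ.1 x) : ℝ)
            * ∏ y ∈ Finset.univ.erase x, (Nat.choose (η.1 y) (ξ.1 y) : ℝ) := by
      rw [Ffun]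
      push_cast
      rw [← Finset.mul_prod_erase _ _ (Finset.mem_univ x)]
      congr 1
      · simp [removeAt]
      · refine Finset.prod_congr rfl fun y hy => ?_
        have : y ≠ x := Finset.ne_of_mem_erase hy
        simp [removeAt, this]
    have hprod2 : (Ffun ξ η : ℝ)
        = (Nat.choose (η.1 x) (ξ.1 x) : ℝ)
            * ∏ y ∈ Finset.univ.erase x, (Nat.choose (η.1 y) (ξ.1 y) : ℝ) := by
      rw [Ffun]
      push_cast
      rw [← Finset.mul_prod_erase _ _ (Finset.mem_univ x)]
    rw [hprod, hprod2, ← mul_assoc, ← mul_assoc, real_choose_pred]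
  calc ann (fun ζ => (Ffun ξ ζ : ℝ)) η
      = ∑ x : V, ((η.1 x : ℝ) - (ξ.1 x : ℝ)) * (Ffun ξ η : ℝ) := by
        rw [ann]; exact Finset.sum_congr rfl fun x _ => hterm x
    _ = (((∑ x, η.1 x : ℕ) : ℝ) - ((∑ x, ξ.1 x : ℕ) : ℝ)) * (Ffun ξ η : ℝ) := by
        rw [← Finset.sum_mul]
        push_cast
        rw [Finset.sum_sub_distrib]

/-- Sector preservation implies `L` commutes with multiplication by the particle number. -/
lemma numL_comm (L : (Conf V N → ℝ) →ₗ[ℝ] (Conf V N → ℝ))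
    (hsector : ∀ k ≤ N, ∀ f : Conf V N → ℝ,
        (∀ η : Conf V N, (∑ x, η.1 x) ≠ k → f η = 0) →
        ∀ η : Conf V N, (∑ x, η.1 x) ≠ k → L f η = 0)
    (f : Conf V N → ℝ) : L (numL V N f) = numL V N (L f) := by
  classical
  set fk : ℕ → Conf V N → ℝ := fun k η => if (∑ x, η.1 x) = k then f η else 0 with hfk
  have hsum : f = ∑ k ∈ Finset.range (N + 1), fk k := by
    funext η
    have hη : (∑ x, η.1 x) ∈ Finset.range (N + 1) := Finset.mem_range_succ_iff.mpr η.2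
    simp only [Finset.sum_apply, hfk]
    rw [Finset.sum_ite_eq _ _ (fun _ => f η)]
    simp [hη]
  have hnum : numL V N f = ∑ k ∈ Finset.range (N + 1), ((k : ℝ) • fk k) := by
    funext η
    have hη : (∑ x, η.1 x) ∈ Finset.range (N + 1) := Finset.mem_range_succ_iff.mpr η.2
    simp only [Finset.sum_apply, Pi.smul_apply, smul_eq_mul, hfk, mul_ite, mul_zero]
    simp [Finset.sum_ite_eq, hη, numL]
  have hvan : ∀ k ∈ Finset.range (N + 1), ∀ η : Conf V N,
      (∑ x, η.1 x) ≠ k → L (fk k) η = 0 := by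
    intro k hk η hη
    exact hsector k (Finset.mem_range_succ_iff.mp hk) (fk k)
      (fun ζ hζ => by simp [hfk, hζ]) η hη
  funext η
  have h1 : L (numL V N f) η = ∑ k ∈ Finset.range (N + 1), (k : ℝ) * L (fk k) η := by
    rw [hnum, map_sum]
    simp [Finset.sum_apply]
  have h2 : numL V N (L f) η
      = ∑ k ∈ Finset.range (N + 1), ((∑ x, η.1 x : ℕ) : ℝ) * L (fk k) η := by
    have : L f = ∑ k ∈ Finset.range (N + 1), L (fk k) := by
      rw [hsum, map_sum]
    simp only [numL, LinearMap.coe_mk, AddHom.coe_mk, this, Finset.sum_apply, Finset.mul_sum]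
  rw [h1, h2]
  refine (Finset.sum_congr rfl fun k hk => ?_).symm
  by_cases hke : (∑ x, η.1 x) = k
  · rw [hke]
  · rw [hvan k hk η hke, mul_zero, mul_zero]

end Main

/-- **Averaging over one-particle removals** (Proposition 3.2): for a consistent,
particle-number-conserving configuration process, time-dependent factorial moments of
order `|ξ|` started from `η` are an average of the same moments started from
configurations with one particle removed. -/
theorem stmt7 {V : Type*} [Fintype V] [DecidableEq V] (N : ℕ)
    (L : (Conf V N → ℝ) →ₗ[ℝ] (Conf V N → ℝ))
    (hcomm : ∀ f, L (ann f) = ann (L f))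
    (hsector : ∀ k ≤ N, ∀ f : Conf V N → ℝ,
        (∀ η : Conf V N, (∑ x, η.1 x) ≠ k → f η = 0) →
        ∀ η : Conf V N, (∑ x, η.1 x) ≠ k → L f η = 0)
    (t : ℝ) (ξ η : Conf V N)
    (hξ : 1 ≤ ∑ x, ξ.1 x) (hξη : (∑ x, ξ.1 x) < ∑ x, η.1 x) :
    expOp t L (fun ζ => (Ffun ξ ζ : ℝ)) η
      = ((∑ x, η.1 x : ℝ) - (∑ x, ξ.1 x : ℝ))⁻¹ *
          ∑ i : V, (η.1 i : ℝ) * expOp t L (fun ζ => (Ffun ξ ζ : ℝ)) (removeAt η i) := by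
  classical
  set F : Conf V N → ℝ := fun ζ => (Ffun ξ ζ : ℝ) with hF
  set g : Conf V N → ℝ := expOp t L F with hg
  set c : ℝ := ((∑ x, ξ.1 x : ℕ) : ℝ) with hc
  -- the annihilation operator applied to g
  have key : ann g η = (((∑ x, η.1 x : ℕ) : ℝ) - c) * g η := by
    have e1 : ann g = expOp t L (ann F) := by
      have := expOp_comm t L (annL V N) (fun f => hcomm f) F
      exact this.symm
    have e2 : ann F = numL V N F - c • F := by
      funext ζ
      have := ann_Ffun ξ ζ
      simp only [Pi.sub_apply, Pi.smul_apply, smul_eq_mul, numL, LinearMap.coe_mk,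
        AddHom.coe_mk]
      rw [this]
      ring
    have e3 : expOp t L (numL V N F) = numL V N (expOp t L F) :=
      expOp_comm t L (numL V N) (numL_comm L hsector) F
    rw [e1, e2, map_sub, map_smul]
    simp only [Pi.sub_apply, Pi.smul_apply, smul_eq_mul]
    rw [e3]
    simp only [numL, LinearMap.coe_mk, AddHom.coe_mk, ← hg]
    ring
  -- conclude
  have hne : ((∑ x, (η.1 x : ℝ)) - ∑ x, (ξ.1 x : ℝ)) ≠ 0 := by
    have h1 : ((∑ x, ξ.1 x : ℕ) : ℝ) < ((∑ x, η.1 x : ℕ) : ℝ) := by exact_mod_cast hξη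
    push_cast at h1
    linarith
  have key' : ∑ i : V, (η.1 i : ℝ) * g (removeAt η i)
      = ((∑ x, (η.1 x : ℝ)) - ∑ x, (ξ.1 x : ℝ)) * g η := by
    simp only [ann, hc] at key
    push_cast at key ⊢
    exact key
  rw [key', inv_mul_cancel_left₀ hne]
end

section
/- Let V be a finite type, N ∈ ℕ, Ω := {η : V → ℕ | Σ_x η_x ≤ N}, and 𝒜 the annihilation operator on functions Ω → ℝ, (𝒜f)(η) := Σ_{x ∈ V} η_x · f(η − δ_x). Let L be a linear operator on functions Ω → ℝ commuting with 𝒜 and preserving each particle-number sector. Then for every t ∈ ℝ, every x = (x_1,…,x_n) ∈ V^n with n ≤ N, and every v ∈ V: (exp(t·L)(η ↦ η_v))(φ(x)) = Σ_{j=1}^n (exp(t·L) h_{δ_v})(δ_{x_j}), where h_{δ_v} is the indicator of the single-particle configuration δ_v. -/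
namespace Stmt9Aux
open Finset
variable {V : Type*} [Fintype V] [DecidableEq V] {N : ℕ}

/-- ℕ-valued binomial identity. -/
lemma choose_aux (a b : ℕ) : a * Nat.choose (a - 1) b = (a - b) * Nat.choose a b := by
  cases a with
  | zero => simp
  | succ e =>
    have h1 : (e + 1) * Nat.choose e b = Nat.choose (e + 1) (b + 1) * (b + 1) :=
      Nat.add_one_mul_choose_eq e b
    have h2 : Nat.choose (e + 1) (b + 1) * (b + 1) = Nat.choose (e + 1) b * (e + 1 - b) :=
      Nat.choose_succ_right_eq (e + 1) b
    simpa [Nat.mul_comm] using h1.trans h2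

lemma key_pt (η ξ : Conf V N) (x : V) :
    η.1 x * Ffun ξ (removeAt η x) = (η.1 x - ξ.1 x) * Ffun ξ η := by
  unfold Ffun
  rw [← Finset.mul_prod_erase Finset.univ _ (Finset.mem_univ x),
      ← Finset.mul_prod_erase Finset.univ (fun y => Nat.choose (η.1 y) (ξ.1 y)) (Finset.mem_univ x)]
  have hrem : ∀ y ∈ Finset.univ.erase x,
      Nat.choose ((removeAt η x).1 y) (ξ.1 y) = Nat.choose (η.1 y) (ξ.1 y) := by
    intro y hy
    have : y ≠ x := Finset.ne_of_mem_erase hy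
    simp [removeAt, this]
  rw [Finset.prod_congr rfl hrem]
  have hx : (removeAt η x).1 x = η.1 x - 1 := by simp [removeAt]
  rw [hx, ← Nat.mul_assoc, ← Nat.mul_assoc, choose_aux]

lemma Ffun_le {ξ η : Conf V N} (h : Ffun ξ η ≠ 0) : ∀ y, ξ.1 y ≤ η.1 y := by
  intro y
  by_contra hy
  push_neg at hy
  exact h (Finset.prod_eq_zero (Finset.mem_univ y) (Nat.choose_eq_zero_of_lt hy))

lemma sz_removeAt (η : Conf V N) (x : V) (h : η.1 x ≠ 0) :
    (∑ y, (removeAt η x).1 y) + 1 = ∑ y, η.1 y := by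
  rw [← Finset.add_sum_erase Finset.univ _ (Finset.mem_univ x),
      ← Finset.add_sum_erase Finset.univ η.1 (Finset.mem_univ x)]
  have hrem : ∀ y ∈ Finset.univ.erase x, (removeAt η x).1 y = η.1 y := by
    intro y hy
    have : y ≠ x := Finset.ne_of_mem_erase hy
    simp [removeAt, this]
  rw [Finset.sum_congr rfl hrem]
  have hx : (removeAt η x).1 x = η.1 x - 1 := by simp [removeAt]
  have he : ∑ y ∈ Finset.univ.erase x, η.1 y = (Finset.univ.erase x).sum η.1 := rfl
  omega


noncomputable def annCLM (V : Type*) [Fintype V] [DecidableEq V] (N : ℕ) :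
    (Conf V N → ℝ) →L[ℝ] (Conf V N → ℝ) :=
  LinearMap.toContinuousLinearMap
    { toFun := ann
      map_add' := by
        intro f g; funext η
        simp [ann, mul_add, Finset.sum_add_distrib]
      map_smul' := by
        intro c f; funext η
        simp [ann, Finset.mul_sum, mul_left_comm] }

lemma annCLM_apply (f : Conf V N → ℝ) (η : Conf V N) :
    annCLM V N f η = ∑ x : V, (η.1 x : ℝ) * f (removeAt η x) := rfl

noncomputable def projCLM (V : Type*) [Fintype V] [DecidableEq V] (N : ℕ) (k : ℕ) :
    (Conf V N → ℝ) →L[ℝ] (Conf V N → ℝ) :=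
  LinearMap.toContinuousLinearMap
    { toFun := fun f η => if (∑ y, η.1 y) = k then f η else 0
      map_add' := by
        intro f g; funext η; by_cases h : (∑ y, η.1 y) = k <;> simp [h]
      map_smul' := by
        intro c f; funext η; by_cases h : (∑ y, η.1 y) = k <;> simp [h] }

lemma projCLM_apply (k : ℕ) (f : Conf V N → ℝ) (η : Conf V N) :
    projCLM V N k f η = if (∑ y, η.1 y) = k then f η else 0 := rfl

/-- The translated step term identity. -/
lemma step_term (η ξ : Conf V N) (m : ℕ) (c : ℝ) (x : V) :
    (η.1 x : ℝ) * (if (∑ y, ξ.1 y) + m = (∑ y, (removeAt η x).1 y)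
        then (Ffun ξ (removeAt η x) : ℝ) * c else 0)
      = ((η.1 x - ξ.1 x : ℕ) : ℝ) *
          (if (∑ y, ξ.1 y) + (m + 1) = (∑ y, η.1 y) then (Ffun ξ η : ℝ) * c else 0) := by
  by_cases h0 : η.1 x = 0
  · have hr : removeAt η x = η := by
      apply Subtype.ext; funext y
      by_cases hy : y = x <;> simp [removeAt, hy, h0]
    rw [hr, h0]
    simp only [Nat.zero_sub, Nat.cast_zero, zero_mul]
  · have hsz := sz_removeAt η x h0
    have hcond : ((∑ y, ξ.1 y) + m = ∑ y, (removeAt η x).1 y) ↔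
        ((∑ y, ξ.1 y) + (m + 1) = ∑ y, η.1 y) := by omega
    by_cases hc : (∑ y, ξ.1 y) + (m + 1) = ∑ y, η.1 y
    · rw [if_pos (hcond.mpr hc), if_pos hc]
      have hkey : (η.1 x : ℝ) * (Ffun ξ (removeAt η x) : ℝ)
          = ((η.1 x - ξ.1 x : ℕ) : ℝ) * (Ffun ξ η : ℝ) := by
        exact_mod_cast congrArg (Nat.cast (R := ℝ)) (key_pt η ξ x)
      rw [← mul_assoc, ← mul_assoc, hkey]
    · rw [if_neg (fun h => hc (hcond.mp h)), if_neg hc, mul_zero, mul_zero]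

lemma annIter_eq (m : ℕ) (f : Conf V N → ℝ) (η : Conf V N) :
    ((annCLM V N) ^ m) f η
      = (m.factorial : ℝ) *
          ∑ ξ : Conf V N, (if (∑ y, ξ.1 y) + m = ∑ y, η.1 y
            then (Ffun ξ η : ℝ) * f ξ else 0) := by
  induction m generalizing f η with
  | zero =>
    rw [pow_zero, ContinuousLinearMap.one_apply]
    rw [Nat.factorial_zero, Nat.cast_one, one_mul]
    symm
    have hz : ∀ ξ ∈ Finset.univ, ξ ≠ η → (if (∑ y, ξ.1 y) + 0 = ∑ y, η.1 y
        then (Ffun ξ η : ℝ) * f ξ else 0) = 0 := by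
      intro ξ _ hne
      by_cases hc : (∑ y, ξ.1 y) + 0 = ∑ y, η.1 y
      · by_cases hF : Ffun ξ η = 0
        · simp [hF]
        · exfalso
          apply hne
          have hle := Ffun_le hF
          have heq : ∀ y, ξ.1 y = η.1 y := by
            intro y
            by_contra hy
            have hlt : ξ.1 y < η.1 y := lt_of_le_of_ne (hle y) hy
            have : (∑ z, ξ.1 z) < ∑ z, η.1 z :=
              Finset.sum_lt_sum (fun i _ => hle i) ⟨y, Finset.mem_univ y, hlt⟩
            omega
          exact Subtype.ext (funext heq)
      · rw [if_neg hc]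
    rw [Finset.sum_eq_single_of_mem η (Finset.mem_univ η) hz]
    simp [Ffun, Nat.choose_self]
  | succ m ih =>
    rw [pow_succ']
    rw [ContinuousLinearMap.mul_apply, annCLM_apply]
    have hih : ∀ x : V, ((annCLM V N) ^ m) f (removeAt η x)
        = (m.factorial : ℝ) * ∑ ξ : Conf V N, (if (∑ y, ξ.1 y) + m = ∑ y, (removeAt η x).1 y
            then (Ffun ξ (removeAt η x) : ℝ) * f ξ else 0) := fun x => ih f (removeAt η x)
    calc ∑ x : V, (η.1 x : ℝ) * ((annCLM V N) ^ m) f (removeAt η x)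
        = (m.factorial : ℝ) * ∑ x : V, ∑ ξ : Conf V N,
            (η.1 x : ℝ) * (if (∑ y, ξ.1 y) + m = ∑ y, (removeAt η x).1 y
              then (Ffun ξ (removeAt η x) : ℝ) * f ξ else 0) := by
          rw [Finset.mul_sum]
          refine Finset.sum_congr rfl fun x _ => ?_
          rw [hih x, mul_left_comm, Finset.mul_sum]
      _ = (m.factorial : ℝ) * ∑ ξ : Conf V N, ∑ x : V,
            ((η.1 x - ξ.1 x : ℕ) : ℝ) *
              (if (∑ y, ξ.1 y) + (m + 1) = ∑ y, η.1 y then (Ffun ξ η : ℝ) * f ξ else 0) := by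
          rw [Finset.sum_comm]
          congr 1
          exact Finset.sum_congr rfl fun ξ _ =>
            Finset.sum_congr rfl fun x _ => step_term η ξ m (f ξ) x
      _ = (m.factorial : ℝ) * ∑ ξ : Conf V N, ((m : ℝ) + 1) *
            (if (∑ y, ξ.1 y) + (m + 1) = ∑ y, η.1 y then (Ffun ξ η : ℝ) * f ξ else 0) := by
          congr 1
          refine Finset.sum_congr rfl fun ξ _ => ?_
          rw [← Finset.sum_mul]
          by_cases hc : (∑ y, ξ.1 y) + (m + 1) = ∑ y, η.1 y
          · by_cases hF : Ffun ξ η = 0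
            · simp [hF]
            · have hle := Ffun_le hF
              have hsum : (∑ y, (η.1 y - ξ.1 y)) = m + 1 := by
                have h2 : (∑ y, (η.1 y - ξ.1 y + ξ.1 y)) = ∑ y, η.1 y :=
                  Finset.sum_congr rfl fun y _ => Nat.sub_add_cancel (hle y)
                rw [Finset.sum_add_distrib] at h2
                omega
              have : (∑ x : V, ((η.1 x - ξ.1 x : ℕ) : ℝ)) = ((m : ℝ) + 1) := by
                rw [← Nat.cast_sum, hsum]; push_cast; ring
              rw [this]
          · rw [if_neg hc, mul_zero, mul_zero]
      _ = ((m + 1).factorial : ℝ) * ∑ ξ : Conf V N,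
            (if (∑ y, ξ.1 y) + (m + 1) = ∑ y, η.1 y then (Ffun ξ η : ℝ) * f ξ else 0) := by
          rw [← Finset.mul_sum, Nat.factorial_succ]
          push_cast
          ring

def deltaConf (V : Type*) [Fintype V] [DecidableEq V] {N : ℕ} (hN : 1 ≤ N) (u : V) :
    Conf V N :=
  ⟨fun y => if y = u then 1 else 0, by
    rw [Finset.sum_ite_eq' Finset.univ u (fun _ => 1)]
    simpa using hN⟩

lemma sz_deltaConf (hN : 1 ≤ N) (u : V) : (∑ y, (deltaConf V hN u).1 y) = 1 := by
  simp [deltaConf, Finset.sum_ite_eq' Finset.univ u (fun _ => (1:ℕ))]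

lemma Ffun_deltaConf (hN : 1 ≤ N) (u : V) (η : Conf V N) :
    Ffun (deltaConf V hN u) η = η.1 u := by
  unfold Ffun
  rw [Finset.prod_eq_single u]
  · simp [deltaConf]
  · intro y _ hy; simp [deltaConf, hy]
  · simp

lemma eq_deltaConf_of_sz_one (hN : 1 ≤ N) (ξ : Conf V N) (h : (∑ y, ξ.1 y) = 1) :
    ∃ u : V, ξ = deltaConf V hN u := by
  have hex : ∃ u : V, ξ.1 u ≠ 0 := by
    by_contra hall
    push_neg at hall
    rw [Finset.sum_eq_zero (fun y _ => hall y)] at h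
    omega
  obtain ⟨u, hu⟩ := hex
  refine ⟨u, Subtype.ext (funext fun y => ?_)⟩
  have hsum : ξ.1 u + ∑ z ∈ Finset.univ.erase u, ξ.1 z = 1 := by
    rw [Finset.add_sum_erase Finset.univ ξ.1 (Finset.mem_univ u)]
    exact h
  have hu1 : ξ.1 u = 1 := by omega
  have hz : ∑ z ∈ Finset.univ.erase u, ξ.1 z = 0 := by omega
  by_cases hy : y = u
  · subst hy; simpa [deltaConf] using hu1
  · have : ξ.1 y = 0 := by
      have := (Finset.sum_eq_zero_iff.mp hz) y (Finset.mem_erase.mpr ⟨hy, Finset.mem_univ y⟩)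
      exact this
    simp [deltaConf, hy, this]

lemma deltaConf_inj (hN : 1 ≤ N) {u u' : V} (h : deltaConf V hN u = deltaConf V hN u') :
    u = u' := by
  have := congrFun (congrArg Subtype.val h) u
  simp [deltaConf] at this
  by_contra hne
  exact hne this

lemma sz_phiS {n : ℕ} (hn : n ≤ N) (x : Fin n → V) (S : Finset (Fin n)) :
    (∑ y, (phiS hn x S).1 y) = S.card := by
  show (∑ y : V, ∑ i ∈ S, if x i = y then (1:ℕ) else 0) = S.card
  rw [Finset.sum_comm]
  calc ∑ i ∈ S, ∑ y : V, (if x i = y then (1 : ℕ) else 0)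
      = ∑ _i ∈ S, 1 := by
        refine Finset.sum_congr rfl fun i _ => ?_
        simp [Finset.sum_ite_eq]
    _ = S.card := by simp

lemma phiS_singleton {n : ℕ} (hn : n ≤ N) (hN : 1 ≤ N) (x : Fin n → V) (j : Fin n) :
    phiS hn x {j} = deltaConf V hN (x j) := by
  apply Subtype.ext; funext y
  show (∑ i ∈ ({j} : Finset (Fin n)), if x i = y then (1:ℕ) else 0) = _
  rw [Finset.sum_singleton]
  simp only [deltaConf]
  by_cases h : x j = y
  · rw [if_pos h, if_pos h.symm]
  · rw [if_neg h, if_neg (fun hy => h hy.symm)]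

/-- If `P` and `A` commute, then `P` commutes with `exp A` applied pointwise. -/
lemma commute_exp_apply {E : Type*} [NormedRing E] [NormedAlgebra ℝ E]
    [CompleteSpace E] {P A : E} (h : Commute P A) :
    P * NormedSpace.exp A = NormedSpace.exp A * P :=
  h.exp_right

lemma annCLM_eq (f : Conf V N → ℝ) : annCLM V N f = ann f := rfl


end Stmt9Aux

open Stmt9Aux


/-- **Expected occupation numbers from single random walkers** (Corollary 3.1): for a
consistent, particle-number-conserving configuration process, the expected occupation
number at `v` of the process started from `n` particles at positions `x` is the sum over
the initial positions of the single random-walker transition probabilities into `v`. -/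
theorem stmt9 {V : Type*} [Fintype V] [DecidableEq V] (N : ℕ)
    (L : (Conf V N → ℝ) →ₗ[ℝ] (Conf V N → ℝ))
    (hcomm : ∀ f, L (ann f) = ann (L f))
    (hsector : ∀ k ≤ N, ∀ f : Conf V N → ℝ,
        (∀ η : Conf V N, (∑ x, η.1 x) ≠ k → f η = 0) →
        ∀ η : Conf V N, (∑ x, η.1 x) ≠ k → L f η = 0)
    (t : ℝ) (n : ℕ) (hn : n ≤ N) (x : Fin n → V) (v : V) :
    expOp t L (fun η => (η.1 v : ℝ)) (phiS hn x Finset.univ)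
      = ∑ j : Fin n,
          expOp t L (fun η => if η.1 = (fun y => if y = v then 1 else 0) then 1 else 0)
            (phiS hn x {j}) := by
  classical
  set Lc := LinearMap.toContinuousLinearMap L with hLcdef
  set A := t • Lc with hAdef
  set Eop := NormedSpace.exp A with hEdef
  set g : Conf V N → ℝ := fun η => (η.1 v : ℝ) with hg
  set hfun : Conf V N → ℝ :=
    fun η => if η.1 = (fun y => if y = v then 1 else 0) then 1 else 0 with hh
  have hEop : ∀ f : Conf V N → ℝ, expOp t L f = Eop f := fun f => rfl
  have hLcapp : ∀ f : Conf V N → ℝ, Lc f = L f := fun f => rfl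
  have hLaux : ∀ k (f : Conf V N → ℝ), (∀ η : Conf V N, (∑ y, η.1 y) ≠ k → f η = 0) →
      ∀ η : Conf V N, (∑ y, η.1 y) ≠ k → Lc f η = 0 := by
    intro k f hf η hη
    rw [hLcapp]
    by_cases hk : k ≤ N
    · exact hsector k hk f hf η hη
    · have hf0 : f = 0 := funext fun η' => hf η' (by have := η'.2; omega)
      rw [hf0, map_zero]
      rfl
  have hdec : ∀ f : Conf V N → ℝ, f = ∑ k ∈ Finset.range (N + 1), projCLM V N k f := by
    intro f; funext η
    rw [Finset.sum_apply]
    simp only [projCLM_apply]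
    rw [Finset.sum_ite_eq (Finset.range (N + 1)) (∑ y, η.1 y) (fun _ => f η),
      if_pos (Finset.mem_range.mpr (Nat.lt_succ_of_le η.2))]
  have hPL : ∀ k, (projCLM V N k) * Lc = Lc * (projCLM V N k) := by
    intro k
    apply ContinuousLinearMap.ext
    intro f
    funext η
    rw [ContinuousLinearMap.mul_apply, ContinuousLinearMap.mul_apply, projCLM_apply]
    by_cases hη : (∑ y, η.1 y) = k
    · rw [if_pos hη]
      have hk : k ≤ N := hη ▸ η.2
      have hLf : Lc f η = Lc (projCLM V N k f) η := by
        conv_lhs => rw [hdec f]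
        rw [map_sum, Finset.sum_apply]
        exact Finset.sum_eq_single_of_mem k (Finset.mem_range.mpr (Nat.lt_succ_of_le hk))
          (fun b _ hb => hLaux b (projCLM V N b f)
            (fun η' hη' => by rw [projCLM_apply, if_neg hη'])
            η (by rw [hη]; exact fun hc => hb hc.symm))
      exact hLf
    · rw [if_neg hη]
      exact (hLaux k (projCLM V N k f)
        (fun η' hη' => by rw [projCLM_apply, if_neg hη']) η hη).symm
  have hPA : ∀ k, Commute (projCLM V N k) A := fun k => Commute.smul_right (hPL k : Commute _ _) t
  have hPE : ∀ k (f : Conf V N → ℝ), projCLM V N k (Eop f) = Eop (projCLM V N k f) := by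
    intro k f
    have h2 := commute_exp_apply (hPA k)
    calc projCLM V N k (Eop f) = ((projCLM V N k) * Eop) f := by
          rw [ContinuousLinearMap.mul_apply]
      _ = (Eop * projCLM V N k) f := by rw [hEdef, h2]
      _ = Eop (projCLM V N k f) := by rw [ContinuousLinearMap.mul_apply]
  have hsupp : ∀ k (f : Conf V N → ℝ), (∀ η : Conf V N, (∑ y, η.1 y) ≠ k → f η = 0) →
      ∀ η : Conf V N, (∑ y, η.1 y) ≠ k → Eop f η = 0 := by
    intro k f hf η hη
    have hpf : projCLM V N k f = f := by
      funext η'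
      rw [projCLM_apply]
      by_cases h : (∑ y, η'.1 y) = k
      · rw [if_pos h]
      · rw [if_neg h, hf η' h]
    calc Eop f η = Eop (projCLM V N k f) η := by rw [hpf]
      _ = projCLM V N k (Eop f) η := by rw [hPE]
      _ = 0 := by rw [projCLM_apply, if_neg hη]
  have hszφ : (∑ y, (phiS hn x Finset.univ).1 y) = n := by
    rw [sz_phiS]; simp
  have hred : Eop g (phiS hn x Finset.univ) = Eop (projCLM V N n g) (phiS hn x Finset.univ) := by
    conv_lhs => rw [hdec g]
    rw [map_sum, Finset.sum_apply]
    exact Finset.sum_eq_single_of_mem n (Finset.mem_range.mpr (Nat.lt_succ_of_le hn))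
      (fun b _ hb => hsupp b (projCLM V N b g)
        (fun η' hη' => by rw [projCLM_apply, if_neg hη'])
        _ (by rw [hszφ]; exact fun hc => hb hc.symm))
  rcases Nat.eq_zero_or_pos n with hn0 | hpos
  · subst hn0
    have hproj0 : projCLM V N 0 g = 0 := by
      funext η
      rw [projCLM_apply]
      by_cases h : (∑ y, η.1 y) = 0
      · rw [if_pos h]
        have hle : η.1 v ≤ ∑ y, η.1 y :=
          Finset.single_le_sum (f := η.1) (fun i _ => Nat.zero_le _) (Finset.mem_univ v)
        have hv : η.1 v = 0 := by omega
        rw [hg]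
        simp [hv]
      · rw [if_neg h]; rfl
    rw [hEop, hred, hproj0, map_zero]
    simp
  · obtain ⟨m, rfl⟩ : ∃ m, n = m + 1 := ⟨n - 1, by omega⟩
    have hN1 : 1 ≤ N := le_trans hpos hn
    set B := annCLM V N with hB
    have hBL : B * Lc = Lc * B := by
      apply ContinuousLinearMap.ext
      intro f
      rw [ContinuousLinearMap.mul_apply, ContinuousLinearMap.mul_apply, hB,
        annCLM_eq, annCLM_eq, hLcapp, hLcapp]
      exact (hcomm f).symm
    have hBA : Commute B A := Commute.smul_right (hBL : Commute _ _) t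
    have hBmE : B ^ m * Eop = Eop * B ^ m := by
      rw [hEdef]
      exact commute_exp_apply (hBA.pow_left m)
    -- the iterated annihilation of the single-site indicator
    have hBmH : ∀ η : Conf V N, (B ^ m) hfun η
        = (m.factorial : ℝ) * (if (∑ y, η.1 y) = m + 1 then (η.1 v : ℝ) else 0) := by
      intro η
      rw [hB, annIter_eq]
      congr 1
      have hterm : ∀ ξ : Conf V N,
          (if (∑ y, ξ.1 y) + m = ∑ y, η.1 y then (Ffun ξ η : ℝ) * hfun ξ else 0)
            = (if ξ = deltaConf V hN1 v
                then (if (∑ y, η.1 y) = m + 1 then (η.1 v : ℝ) else 0) else 0) := by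
        intro ξ
        by_cases hξ : ξ = deltaConf V hN1 v
        · subst hξ
          rw [if_pos rfl, sz_deltaConf]
          have h1 : hfun (deltaConf V hN1 v) = 1 := by
            rw [hh]
            exact if_pos rfl
          rw [h1, Ffun_deltaConf, mul_one]
          by_cases hc : (∑ y, η.1 y) = m + 1
          · rw [if_pos (by omega), if_pos hc]
          · rw [if_neg (by omega), if_neg hc]
        · rw [if_neg hξ]
          have hzero : hfun ξ = 0 := by
            rw [hh]
            refine if_neg fun hv => hξ (Subtype.ext hv)
          rw [hzero, mul_zero, ite_self]
      rw [Finset.sum_congr rfl (fun ξ _ => hterm ξ),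
        Finset.sum_ite_eq' Finset.univ (deltaConf V hN1 v) _,
        if_pos (Finset.mem_univ _)]
    have hfact : ((m.factorial : ℝ)) ≠ 0 := Nat.cast_ne_zero.mpr m.factorial_ne_zero
    have hprojg : projCLM V N (m + 1) g = (m.factorial : ℝ)⁻¹ • ((B ^ m) hfun) := by
      funext η
      rw [Pi.smul_apply, hBmH η, smul_eq_mul, ← mul_assoc, inv_mul_cancel₀ hfact, one_mul,
        projCLM_apply]
    -- support of the evolved single-particle function
    have hF1 : ∀ η : Conf V N, (∑ y, η.1 y) ≠ 1 → Eop hfun η = 0 := by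
      refine hsupp 1 hfun ?_
      intro η hη
      rw [hh]
      refine if_neg fun hv => hη ?_
      have : η = deltaConf V hN1 v := Subtype.ext hv
      rw [this, sz_deltaConf]
    have hszφ' : (∑ y, (phiS hn x Finset.univ).1 y) = m + 1 := hszφ
    -- main chain
    rw [hEop, hred, hprojg, map_smul, Pi.smul_apply, smul_eq_mul]
    have hswap : Eop ((B ^ m) hfun) = (B ^ m) (Eop hfun) := by
      calc Eop ((B ^ m) hfun) = (Eop * B ^ m) hfun := by rw [ContinuousLinearMap.mul_apply]
        _ = (B ^ m * Eop) hfun := by rw [hBmE]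
        _ = (B ^ m) (Eop hfun) := by rw [ContinuousLinearMap.mul_apply]
    rw [hswap, hB, annIter_eq, ← mul_assoc, inv_mul_cancel₀ hfact, one_mul]
    -- now the combinatorial evaluation
    set F : Conf V N → ℝ := Eop hfun with hFdef
    have hcomb : ∀ ξ : Conf V N,
        (if (∑ y, ξ.1 y) + m = ∑ y, (phiS hn x Finset.univ).1 y
            then (Ffun ξ (phiS hn x Finset.univ) : ℝ) * F ξ else 0)
          = ∑ u : V, (if ξ = deltaConf V hN1 u
              then (Ffun ξ (phiS hn x Finset.univ) : ℝ) * F ξ else 0) := by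
      intro ξ
      by_cases h1 : (∑ y, ξ.1 y) = 1
      · rw [if_pos (by omega)]
        obtain ⟨u0, hu0⟩ := eq_deltaConf_of_sz_one hN1 ξ h1
        have heach : ∀ u : V, (if ξ = deltaConf V hN1 u
            then (Ffun ξ (phiS hn x Finset.univ) : ℝ) * F ξ else 0)
              = (if u = u0 then (Ffun ξ (phiS hn x Finset.univ) : ℝ) * F ξ else 0) := by
          intro u
          by_cases hu : u = u0
          · subst hu
            rw [if_pos hu0, if_pos rfl]
          · rw [if_neg (fun hcon => hu (deltaConf_inj hN1 (hu0.symm.trans hcon)).symm),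
              if_neg hu]
        rw [Finset.sum_congr rfl (fun u _ => heach u),
          Finset.sum_ite_eq' Finset.univ u0 _, if_pos (Finset.mem_univ u0)]
      · have hele : ∀ u : V, ξ ≠ deltaConf V hN1 u := fun u hcon =>
          h1 (by rw [hcon, sz_deltaConf])
        rw [if_neg (by omega), Finset.sum_eq_zero (fun u _ => if_neg (hele u))]
    rw [Finset.sum_congr rfl (fun ξ _ => hcomb ξ), Finset.sum_comm]
    have hinner : ∀ u : V,
        (∑ ξ : Conf V N, if ξ = deltaConf V hN1 u
            then (Ffun ξ (phiS hn x Finset.univ) : ℝ) * F ξ else 0)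
          = ((phiS hn x Finset.univ).1 u : ℝ) * F (deltaConf V hN1 u) := by
      intro u
      rw [Finset.sum_ite_eq' Finset.univ (deltaConf V hN1 u) _, if_pos (Finset.mem_univ _),
        Ffun_deltaConf]
    rw [Finset.sum_congr rfl (fun u _ => hinner u)]
    have hφu : ∀ u : V, ((phiS hn x Finset.univ).1 u : ℝ)
        = ∑ j : Fin (m + 1), (if x j = u then (1 : ℝ) else 0) := by
      intro u
      show (((∑ j : Fin (m + 1), if x j = u then (1:ℕ) else 0) : ℕ) : ℝ) = _
      push_cast
      exact Finset.sum_congr rfl fun j _ => by split <;> norm_num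
    calc ∑ u : V, ((phiS hn x Finset.univ).1 u : ℝ) * F (deltaConf V hN1 u)
        = ∑ u : V, ∑ j : Fin (m + 1),
            (if x j = u then (1 : ℝ) else 0) * F (deltaConf V hN1 u) := by
          refine Finset.sum_congr rfl fun u _ => ?_
          rw [hφu u, Finset.sum_mul]
      _ = ∑ j : Fin (m + 1), ∑ u : V,
            (if x j = u then F (deltaConf V hN1 u) else 0) := by
          rw [Finset.sum_comm]
          exact Finset.sum_congr rfl fun j _ => Finset.sum_congr rfl fun u _ => by
            split <;> simp
      _ = ∑ j : Fin (m + 1), F (deltaConf V hN1 (x j)) := by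
          refine Finset.sum_congr rfl fun j _ => ?_
          rw [Finset.sum_ite_eq Finset.univ (x j) (fun u => F (deltaConf V hN1 u)),
            if_pos (Finset.mem_univ _)]
      _ = ∑ j : Fin (m + 1), expOp t L hfun (phiS hn x {j}) := by
          refine Finset.sum_congr rfl fun j _ => ?_
          rw [hEop, hFdef, phiS_singleton hn hN1 x j]
end
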